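/- Let n ≥ 1, let 1 ≤ k ≤ n−1, and let f₁, f₂ ∈ Q₀ⁿ. If ‖P_H f₁‖_{L¹(H)} ≤ ‖P_H f₂‖_{L¹(H)} for every k-dimensional linear subspace H ⊆ ℝⁿ, then for every invertible linear map A : ℝⁿ → ℝⁿ one also has ‖P_H (Af₁)‖_{L¹(H)} ≤ ‖P_H (Af₂)‖_{L¹(H)} for every k-dimensional linear subspace H ⊆ ℝⁿ, where Af(x) := f(A^{−1}x). -/

import Mathlib

open MeasureTheory

noncomputable section

/-- `ℝⁿ` with its Euclidean structure. -/
abbrev Eucl (n : ℕ) := EuclideanSpace ℝ (Fin n)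

/-- `f : ℝⁿ → [0,∞)` is log-concave:
`f(tx+(1−t)y) ≥ f(x)^t · f(y)^(1−t)` for all `x, y` and `t ∈ (0,1)`. -/
def IsLogConcave {n : ℕ} (f : Eucl n → ℝ) : Prop :=
  ∀ x y : Eucl n, ∀ t : ℝ, 0 < t → t < 1 →
    f x ^ t * f y ^ (1 - t) ≤ f (t • x + (1 - t) • y)

/-- The class `Q₀ⁿ`: nonnegative, log-concave, upper semicontinuous, integrable
functions with positive integral. -/
def MemQ0 {n : ℕ} (f : Eucl n → ℝ) : Prop :=
  (∀ x, 0 ≤ f x) ∧ IsLogConcave f ∧ UpperSemicontinuous f ∧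
    Integrable f ∧ 0 < ∫ x, f x

/-- `‖f‖_∞ = sup f`. -/
def supNorm {n : ℕ} (f : Eucl n → ℝ) : ℝ := ⨆ x, f x

/-- `‖f‖_p = (∫ f^p)^(1/p)`. -/
def lpNorm {n : ℕ} (p : ℝ) (f : Eucl n → ℝ) : ℝ := (∫ x, f x ^ p) ^ (1 / p)

/-- `‖P_H f‖_{L¹(H)} = ∫_H sup_{z ∈ H⊥} f(y+z) dλ_H(y)`, the `L¹(H)`-norm of the
projection of `f` onto the subspace `H` (with the Lebesgue measure on `H` induced
by the Euclidean structure). -/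
def projL1 {n : ℕ} (f : Eucl n → ℝ) (H : Submodule ℝ (Eucl n)) : ℝ :=
  ∫ y : H, ⨆ z : Hᗮ, f ((y : Eucl n) + (z : Eucl n))

/-- `‖S_H f‖_{L¹(H)} = ∫_H f dλ_H`, the integral of the section `f|_H`. -/
def sectL1 {n : ℕ} (f : Eucl n → ℝ) (H : Submodule ℝ (Eucl n)) : ℝ :=
  ∫ y : H, f (y : Eucl n)

open Module in
private theorem projL1_key (n : ℕ) (B : Eucl n ≃ₗ[ℝ] Eucl n) (H : Submodule ℝ (Eucl n)) :
    ∃ (H' : Submodule ℝ (Eucl n)) (c : ℝ), 0 ≤ c ∧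
      finrank ℝ H' = finrank ℝ H ∧
      ∀ f : Eucl n → ℝ, projL1 (fun x => f (B x)) H = c * projL1 f H' := by
  classical
  set K : Submodule ℝ (Eucl n) := (Hᗮ).map B.toLinearMap with hKdef
  set H' : Submodule ℝ (Eucl n) := Kᗮ with hH'def
  have hKK : H'ᗮ = K := Submodule.orthogonal_orthogonal K
  have hfr : finrank ℝ H' = finrank ℝ H := by
    have h1 : finrank ℝ K = finrank ℝ Hᗮ := LinearEquiv.finrank_map_eq B Hᗮ
    have h2 := Submodule.finrank_add_finrank_orthogonal (K := K)
    have h3 := Submodule.finrank_add_finrank_orthogonal (K := H)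
    rw [← hH'def] at h2
    omega
  set φ : H →ₗ[ℝ] H' :=
    ((Submodule.orthogonalProjectionOnto H').toLinearMap).comp (B.toLinearMap.comp H.subtype) with hφdef
  have hφapp : ∀ y : H, (φ y : Eucl n) = Submodule.orthogonalProjectionOnto H' (B (y : Eucl n)) := fun y => rfl
  have hinj : Function.Injective φ := by
    intro x y hxy
    have hsub : φ (x - y) = 0 := by rw [map_sub, hxy, sub_self]
    have hmem : (B ((x : Eucl n) - (y : Eucl n)) : Eucl n) ∈ K := by
      rw [← hKK]
      have : Submodule.orthogonalProjectionOnto H' (B ((x - y : H) : Eucl n)) = 0 := hsub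
      have := Submodule.orthogonalProjectionOnto_eq_zero_iff.mp this
      simpa using this
    obtain ⟨u, hu, huw⟩ := hmem
    have hxy' : ((x : Eucl n) - y) ∈ Hᗮ := by
      have : u = (x : Eucl n) - y := B.injective huw
      rwa [this] at hu
    have hH : ((x : Eucl n) - y) ∈ H := H.sub_mem x.2 y.2
    have : ((x : Eucl n) - y) = 0 := by
      have := (Submodule.mem_orthogonal _ _).mp hxy' _ hH
      rwa [inner_self_eq_zero] at this
    exact Subtype.ext (sub_eq_zero.mp this)
  set e : H ≃ₗ[ℝ] H' := φ.linearEquivOfInjective hinj hfr.symm with hedef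
  have heapp : ∀ y : H, ((e y : H') : Eucl n) = Submodule.orthogonalProjectionOnto H' (B (y : Eucl n)) :=
    fun y => rfl
  have hproj : ∀ y : H, (B (y : Eucl n) : Eucl n) - ((e y : H') : Eucl n) ∈ H'ᗮ := by
    intro y
    rw [heapp]
    exact Submodule.sub_starProjection_mem_orthogonal _
  -- sup identity
  have hsup : ∀ (f : Eucl n → ℝ) (y : H),
      (⨆ z : Hᗮ, f (B ((y : Eucl n) + (z : Eucl n)))) =
        ⨆ w : H'ᗮ, f (((e y : H') : Eucl n) + (w : Eucl n)) := by
    intro f y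
    rw [← sSup_range, ← sSup_range]
    congr 1
    ext a
    simp only [Set.mem_range]
    constructor
    · rintro ⟨z, rfl⟩
      have h1 : (B (z : Eucl n) : Eucl n) ∈ H'ᗮ := by
        rw [hKK]; exact ⟨z, z.2, rfl⟩
      have h2 : B ((y : Eucl n) + z) - ((e y : H') : Eucl n) ∈ H'ᗮ := by
        have : B ((y : Eucl n) + z) - ((e y : H') : Eucl n)
            = ((B (y : Eucl n) : Eucl n) - ((e y : H') : Eucl n)) + B (z : Eucl n) := by
          rw [map_add]; abel
        rw [this]; exact H'ᗮ.add_mem (hproj y) h1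
      exact ⟨⟨_, h2⟩, by simp⟩
    · rintro ⟨w, rfl⟩
      have h2 : (w : Eucl n) - ((B (y : Eucl n) : Eucl n) - ((e y : H') : Eucl n)) ∈ K := by
        rw [← hKK]; exact H'ᗮ.sub_mem w.2 (hproj y)
      obtain ⟨u, hu, huw⟩ := h2
      refine ⟨⟨u, hu⟩, ?_⟩
      have hBu : B ((y : Eucl n) + u) = ((e y : H') : Eucl n) + (w : Eucl n) := by
        have huw' : B u = (w : Eucl n) - ((B (y : Eucl n) : Eucl n) - ((e y : H') : Eucl n)) := huw
        rw [map_add, huw']; abel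
      show f (B ((y : Eucl n) + u)) = _
      rw [hBu]
  -- measure theory
  set eC : H ≃L[ℝ] H' := e.toContinuousLinearEquiv with heC
  set eM : H ≃ᵐ H' := eC.toHomeomorph.toMeasurableEquiv with heM
  haveI : Measure.IsAddHaarMeasure ((volume : Measure H).map eM) := by
    have : (volume : Measure H).map eM = (volume : Measure H).map eC := rfl
    rw [this]; infer_instance
  set c₀ : NNReal := Measure.addHaarScalarFactor ((volume : Measure H).map eM)
      (volume : Measure H') with hc₀
  have hmap : (volume : Measure H).map eM = c₀ • (volume : Measure H') :=
    Measure.isAddLeftInvariant_eq_smul _ _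
  refine ⟨H', (c₀ : ℝ), c₀.coe_nonneg, hfr, fun f => ?_⟩
  have heMapp : ∀ y : H, eM y = e y := fun y => rfl
  calc projL1 (fun x => f (B x)) H
      = ∫ y : H, ⨆ w : H'ᗮ, f (((e y : H') : Eucl n) + (w : Eucl n)) := by
        unfold projL1
        exact integral_congr_ae (Filter.Eventually.of_forall fun y => hsup f y)
    _ = ∫ y : H, (fun u : H' => ⨆ w : H'ᗮ, f ((u : Eucl n) + (w : Eucl n))) (eM y) := by
        simp only [heMapp]
    _ = ∫ u : H', (⨆ w : H'ᗮ, f ((u : Eucl n) + (w : Eucl n)))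
          ∂((volume : Measure H).map eM) := (integral_map_equiv (μ := (volume : Measure H)) eM
          (fun u : H' => ⨆ w : H'ᗮ, f ((u : Eucl n) + (w : Eucl n)))).symm
    _ = ∫ u : H', (⨆ w : H'ᗮ, f ((u : Eucl n) + (w : Eucl n)))
          ∂((c₀ : ENNReal) • (volume : Measure H')) := by rw [hmap, ENNReal.smul_def]
    _ = (c₀ : ℝ) * projL1 f H' := by
        rw [integral_smul_measure]
        simp [projL1, smul_eq_mul]

/-- **Lemma 4.4**: the Shephard condition is invariant under nondegenerate linear
transformations: if `‖P_H f₁‖_{L¹(H)} ≤ ‖P_H f₂‖_{L¹(H)}` for every `k`-dimensional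
subspace `H`, then the same holds for the linear images `Af₁, Af₂`,
where `Af(x) := f(A⁻¹x)`. -/
theorem shephard_condition_linear_invariant (n k : ℕ) (hn : 1 ≤ n)
    (hk1 : 1 ≤ k) (hk2 : k ≤ n - 1)
    (f₁ f₂ : Eucl n → ℝ) (hf₁ : MemQ0 f₁) (hf₂ : MemQ0 f₂)
    (hcond : ∀ H : Submodule ℝ (Eucl n), Module.finrank ℝ H = k →
      projL1 f₁ H ≤ projL1 f₂ H)
    (A : Eucl n ≃ₗ[ℝ] Eucl n) :
    ∀ H : Submodule ℝ (Eucl n), Module.finrank ℝ H = k →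
      projL1 (fun x => f₁ (A.symm x)) H ≤ projL1 (fun x => f₂ (A.symm x)) H := by
  intro H hH
  obtain ⟨H', c, hc, hfr, hproj⟩ := projL1_key n A.symm H
  rw [hproj f₁, hproj f₂]
  exact mul_le_mul_of_nonneg_left (hcond H' (by rw [hfr, hH])) hc
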